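/- Let (f,g) ∈ 𝒞₁(I) and suppose that g' is nowhere zero. If x < y in I and f'/g' is strictly increasing, then for every z ∈ I with z < x, the inequality (f(x)−f(z))/(g(x)−g(z)) < (f(y)−f(z))/(g(y)−g(z)) holds; consequently C_{f,g}(x,z) < C_{f,g}(y,z). -/

import Mathlib

/-- The two-variable Cauchy mean generated by `f` and `g` on `I`. -/
noncomputable def cauchyMean (I : Set ℝ) (f g : ℝ → ℝ) (x y : ℝ) : ℝ :=
  if x = y then x
  else Function.invFunOn (fun t => deriv f t / deriv g t) I ((f x - f y) / (g x - g y))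

private lemma mediant_lt_aux {A B C D : ℝ} (hB : 0 < B) (hD : 0 < D) (h : A / B < C / D) :
    A / B < (A + C) / (B + D) := by
  rw [div_lt_div_iff₀ hB hD] at h
  rw [div_lt_div_iff₀ hB (by linarith)]
  nlinarith

private lemma mediant_lt {A B C D : ℝ} (hsgn : 0 < B ∧ 0 < D ∨ B < 0 ∧ D < 0)
    (h : A / B < C / D) : A / B < (A + C) / (B + D) := by
  rcases hsgn with ⟨hB, hD⟩ | ⟨hB, hD⟩
  · exact mediant_lt_aux hB hD h
  · have h' : (-A) / (-B) < (-C) / (-D) := by rwa [neg_div_neg_eq, neg_div_neg_eq]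
    have := mediant_lt_aux (by linarith : (0:ℝ) < -B) (by linarith : (0:ℝ) < -D) h'
    rw [← neg_add, ← neg_add, neg_div_neg_eq, neg_div_neg_eq] at this
    exact this

/-- Monotonicity of the difference quotients of a 𝒞₁ pair with strictly increasing f'/g',
and the resulting strict monotonicity of the Cauchy mean. -/
theorem cauchyMean_strict_ineq
    (I : Set ℝ) (hI : IsOpen I) (hIc : I.OrdConnected) (hne : I.Nonempty)
    (f g : ℝ → ℝ)
    (hf : ContDiffOn ℝ 1 f I) (hg : ContDiffOn ℝ 1 g I)
    (hg' : ∀ x ∈ I, deriv g x ≠ 0)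
    (hmono : StrictMonoOn (fun x => deriv f x / deriv g x) I)
    (x y : ℝ) (hx : x ∈ I) (hy : y ∈ I) (hxy : x < y) :
    ∀ z ∈ I, z < x →
      (f x - f z) / (g x - g z) < (f y - f z) / (g y - g z) ∧
      cauchyMean I f g x z < cauchyMean I f g y z := by
  intro z hz hzx
  have hfc : ContinuousOn f I := hf.continuousOn
  have hgc : ContinuousOn g I := hg.continuousOn
  have hfd : DifferentiableOn ℝ f I := hf.differentiableOn one_ne_zero
  have hgd : DifferentiableOn ℝ g I := hg.differentiableOn one_ne_zero
  have hIcc : ∀ a ∈ I, ∀ b ∈ I, Set.Icc a b ⊆ I := fun a ha b hb => hIc.out ha hb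
  -- g is injective on pairs a < b
  have gne : ∀ a ∈ I, ∀ b ∈ I, a < b → g b - g a ≠ 0 := by
    intro a ha b hb hab h
    obtain ⟨c, hc, hc0⟩ := exists_deriv_eq_zero hab (hgc.mono (hIcc a ha b hb))
      (sub_eq_zero.mp h).symm
    exact hg' c (hIcc a ha b hb (Set.Ioo_subset_Icc_self hc)) hc0
  -- deriv g is continuous on I
  have hgder : ContinuousOn (deriv g) I := by
    have h1 : ContinuousOn (derivWithin g I) I :=
      hg.continuousOn_derivWithin hI.uniqueDiffOn le_rfl
    exact h1.congr fun t ht => (derivWithin_of_isOpen hI ht).symm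
  -- deriv g has constant sign on I
  have hsign : (∀ t ∈ I, 0 < deriv g t) ∨ (∀ t ∈ I, deriv g t < 0) := by
    by_contra h
    push_neg at h
    obtain ⟨⟨a, ha, ha'⟩, ⟨b, hb, hb'⟩⟩ := h
    rcases le_total a b with hab | hab
    · obtain ⟨c, hc, hc0⟩ := intermediate_value_Icc hab (hgder.mono (hIcc a ha b hb))
        (Set.mem_Icc.mpr ⟨ha', hb'⟩)
      exact hg' c (hIcc a ha b hb hc) hc0
    · obtain ⟨c, hc, hc0⟩ := intermediate_value_Icc' hab (hgder.mono (hIcc b hb a ha))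
        (Set.mem_Icc.mpr ⟨ha', hb'⟩)
      exact hg' c (hIcc b hb a ha hc) hc0
  -- sign of differences of g
  have hgdiff : (∀ a ∈ I, ∀ b ∈ I, a < b → 0 < g b - g a) ∨
      (∀ a ∈ I, ∀ b ∈ I, a < b → g b - g a < 0) := by
    have key : ∀ a ∈ I, ∀ b ∈ I, a < b → ∃ c ∈ I, deriv g c = (g b - g a) / (b - a) := by
      intro a ha b hb hab
      obtain ⟨c, hc, hceq⟩ := exists_deriv_eq_slope g hab (hgc.mono (hIcc a ha b hb))
        (hgd.mono ((Set.Ioo_subset_Icc_self).trans (hIcc a ha b hb)))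
      exact ⟨c, hIcc a ha b hb (Set.Ioo_subset_Icc_self hc), hceq⟩
    rcases hsign with hs | hs
    · left; intro a ha b hb hab
      obtain ⟨c, hcI, hceq⟩ := key a ha b hb hab
      have h1 : 0 < (g b - g a) / (b - a) := hceq ▸ hs c hcI
      have h2 : 0 < b - a := sub_pos.2 hab
      rcases div_pos_iff.mp h1 with ⟨h, _⟩ | ⟨_, h⟩ <;> linarith
    · right; intro a ha b hb hab
      obtain ⟨c, hcI, hceq⟩ := key a ha b hb hab
      have h1 : (g b - g a) / (b - a) < 0 := hceq ▸ hs c hcI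
      have h2 : 0 < b - a := sub_pos.2 hab
      rcases div_neg_iff.mp h1 with ⟨h, h'⟩ | ⟨h, _⟩ <;> linarith
  -- Cauchy MVT wrapper
  have key : ∀ a ∈ I, ∀ b ∈ I, a < b → ∃ c ∈ Set.Ioo a b,
      (f b - f a) / (g b - g a) = deriv f c / deriv g c := by
    intro a ha b hb hab
    have hsub := hIcc a ha b hb
    have hsub' : Set.Ioo a b ⊆ I := Set.Ioo_subset_Icc_self.trans hsub
    obtain ⟨c, hc, hcc⟩ := exists_ratio_deriv_eq_ratio_slope f hab (hfc.mono hsub)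
      (hfd.mono hsub') g (hgc.mono hsub) (hgd.mono hsub')
    have hgba : g b - g a ≠ 0 := gne a ha b hb hab
    have hgc' : deriv g c ≠ 0 := hg' c (hsub' hc)
    refine ⟨c, hc, ?_⟩
    rw [div_eq_div_iff hgba hgc']
    linarith [hcc]
  -- apply MVT to the three pairs
  obtain ⟨c1, hc1, hc1eq⟩ := key z hz x hx hzx
  obtain ⟨c2, hc2, hc2eq⟩ := key x hx y hy hxy
  have hzy : z < y := hzx.trans hxy
  obtain ⟨c3, hc3, hc3eq⟩ := key z hz y hy hzy
  have hc1I : c1 ∈ I := (Set.Ioo_subset_Icc_self.trans (hIcc z hz x hx)) hc1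
  have hc2I : c2 ∈ I := (Set.Ioo_subset_Icc_self.trans (hIcc x hx y hy)) hc2
  have hc3I : c3 ∈ I := (Set.Ioo_subset_Icc_self.trans (hIcc z hz y hy)) hc3
  -- Q(z,x) < Q(x,y)
  have hQ1 : (f x - f z) / (g x - g z) < (f y - f x) / (g y - g x) := by
    rw [hc1eq, hc2eq]
    exact hmono hc1I hc2I (hc1.2.trans hc2.1)
  -- mediant inequality
  have hsgn : 0 < g x - g z ∧ 0 < g y - g x ∨ g x - g z < 0 ∧ g y - g x < 0 := by
    rcases hgdiff with hs | hs
    · exact Or.inl ⟨hs z hz x hx hzx, hs x hx y hy hxy⟩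
    · exact Or.inr ⟨hs z hz x hx hzx, hs x hx y hy hxy⟩
  have hmain : (f x - f z) / (g x - g z) < (f y - f z) / (g y - g z) := by
    have := mediant_lt hsgn hQ1
    have e1 : (f x - f z) + (f y - f x) = f y - f z := by ring
    have e2 : (g x - g z) + (g y - g x) = g y - g z := by ring
    rwa [e1, e2] at this
  refine ⟨hmain, ?_⟩
  -- the Cauchy mean inequality
  have hinj : Set.InjOn (fun t => deriv f t / deriv g t) I := hmono.injOn
  have hx_ne : x ≠ z := hzx.ne'
  have hy_ne : y ≠ z := hzy.ne'
  have hm1 : cauchyMean I f g x z = c1 := by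
    rw [cauchyMean, if_neg hx_ne, hc1eq]
    exact hinj.leftInvOn_invFunOn hc1I
  have hm2 : cauchyMean I f g y z = c3 := by
    rw [cauchyMean, if_neg hy_ne, hc3eq]
    exact hinj.leftInvOn_invFunOn hc3I
  rw [hm1, hm2]
  have : deriv f c1 / deriv g c1 < deriv f c3 / deriv g c3 := by
    rw [← hc1eq, ← hc3eq]; exact hmain
  exact (hmono.lt_iff_lt hc1I hc3I).mp this
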